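/- Define F(z) = (1−(m+1)z)/(1−z)^{m+2} and t = z(1−z)^{m²+2m}, both as formal power series in ℚ[[z]] (with z expressed implicitly as a power series in t). Then for every n ≥ 1 the coefficient of tⁿ in F, viewed as a power series in t, equals ((m+1)/(n(mn+1)))·C((m+1)²n+m, n−1). -/

import Mathlib

open PowerSeries Nat

namespace CIAux

/-- Descending factorial with rational argument: `dsc x k = x(x-1)⋯(x-k+1)`. -/
noncomputable def dsc (x : ℚ) : ℕ → ℚ
  | 0 => 1
  | k+1 => dsc x k * (x - k)

lemma dsc_succ (x : ℚ) (k : ℕ) : dsc x (k+1) = dsc x k * (x - k) := rfl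

lemma dsc_shift (x : ℚ) : ∀ k : ℕ, dsc (x+1) (k+1) = (x+1) * dsc x k := by
  intro k
  induction k with
  | zero => simp [dsc]
  | succ k ih =>
      rw [dsc_succ, ih, dsc_succ]
      push_cast
      ring

/-- `g a M c` is the putative coefficient of `X^(M+1)` in `(1-Z)^(-c)`. -/
noncomputable def g (a M : ℕ) (c : ℚ) : ℚ :=
  c/((M:ℚ)+1) * dsc (((M:ℚ)+1)*(a:ℚ) + c + (M:ℚ)) M / ((M)! : ℚ)

lemma g_zero (a M : ℕ) : g a M 0 = 0 := by simp [g]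

lemma g_base (a : ℕ) (c : ℚ) : g a 0 c = c := by simp [dsc, g]

lemma key_id (a : ℕ) (c : ℚ) (M : ℕ) :
    g a (M+1) c = g a (M+1) (c-1) + g a M (c+a) := by
  unfold g
  push_cast
  have h1 : ((M:ℚ)+1+1)*a + c + ((M:ℚ)+1) = (((M:ℚ)+1+1)*a + c + (M:ℚ)) + 1 := by ring
  have h2 : ((M:ℚ)+1+1)*a + (c-1) + ((M:ℚ)+1) = (((M:ℚ)+1+1)*a + c + (M:ℚ)) := by ring
  have h3 : ((M:ℚ)+1)*a + (c+a) + (M:ℚ) = (((M:ℚ)+1+1)*a + c + (M:ℚ)) := by ring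
  set x : ℚ := ((M:ℚ)+1+1)*a + c + (M:ℚ) with hx
  rw [h1, h2, h3, dsc_shift, dsc_succ]
  have hfac : ((M+1)! : ℚ) = ((M:ℚ)+1) * ((M)! : ℚ) := by
    rw [Nat.factorial_succ]; push_cast; ring
  have hM1 : ((M:ℚ)+1) ≠ 0 := by positivity
  have hM2 : ((M:ℚ)+2) ≠ 0 := by positivity
  have hMf : (((M)!) : ℚ) ≠ 0 := by positivity
  rw [hfac]
  field_simp
  rw [hx]
  ring

lemma dsc_choose : ∀ (T k : ℕ), k ≤ T → dsc (T:ℚ) k = (T.choose k : ℚ) * ((k)! : ℚ) := by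
  intro T k
  induction k with
  | zero => simp [dsc]
  | succ k ih =>
      intro hk
      have hk' : k ≤ T := le_of_succ_le hk
      rw [dsc_succ, ih hk']
      have h := Nat.choose_succ_right_eq T k
      have hc : ((T.choose (k+1) * (k+1) : ℕ) : ℚ) = ((T.choose k * (T - k) : ℕ) : ℚ) := by
        rw [h]
      push_cast [Nat.cast_sub hk'] at hc
      rw [Nat.factorial_succ]
      push_cast
      nlinarith [hc]

lemma coeff_aux (u : (PowerSeries ℚ)ˣ) (a : ℕ)
    (h0 : ∀ e : ℤ, constantCoeff (↑(u ^ e) : PowerSeries ℚ) = 1)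
    (hrec : ∀ e : ℤ, (↑(u ^ e) : PowerSeries ℚ)
      = (↑(u ^ (e+1)) : PowerSeries ℚ) + X * (↑(u ^ (e - a)) : PowerSeries ℚ)) :
    ∀ M : ℕ, ∀ e : ℤ, coeff (M+1) (↑(u ^ e) : PowerSeries ℚ) = g a M (-(e:ℚ)) := by
  have hco : ∀ (N : ℕ) (e : ℤ), coeff (N+1) (↑(u ^ e) : PowerSeries ℚ)
      = coeff (N+1) (↑(u ^ (e+1)) : PowerSeries ℚ)
        + coeff N (↑(u ^ (e - a)) : PowerSeries ℚ) := by
    intro N e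
    conv_lhs => rw [hrec e]
    rw [map_add, coeff_succ_X_mul]
  have hc0 : ∀ (N : ℕ) (e : ℤ), coeff 0 (↑(u ^ e) : PowerSeries ℚ) = 1 := by
    intro N e; rw [coeff_zero_eq_constantCoeff, h0]
  intro M
  induction M with
  | zero =>
      intro e
      rw [g_base]
      induction e using Int.induction_on with
      | zero => simp
      | succ i ih =>
          have h := hco 0 (i : ℤ)
          rw [ih, hc0 0] at h
          norm_num at h
          push_cast
          linarith
      | pred i ih =>
          have h := hco 0 ((-i : ℤ) - 1)
          have he : (-i : ℤ) - 1 + 1 = -i := by ring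
          rw [he, ih, hc0 0] at h
          norm_num at h
          rw [h]; push_cast; ring
  | succ M ih =>
      intro e
      induction e using Int.induction_on with
      | zero =>
          have : ((u : (PowerSeries ℚ)ˣ) ^ (0:ℤ)) = 1 := by simp
          rw [this]
          norm_num [g_zero]
      | succ i ihe =>
          have h := hco (M+1) (i : ℤ)
          rw [ihe, ih] at h
          have key := key_id a (-((i:ℤ):ℚ)) M
          have ha1 : (-(((i:ℤ)+1 : ℤ) : ℚ)) = -((i:ℤ):ℚ) - 1 := by push_cast; ring
          have ha2 : (-(((i:ℤ) - (a:ℤ) : ℤ) : ℚ)) = -((i:ℤ):ℚ) + (a:ℚ) := by push_cast; ring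
          rw [ha2] at h
          rw [ha1]
          linarith [h, key]
      | pred i ihe =>
          have h := hco (M+1) ((-i : ℤ) - 1)
          have he : (-i : ℤ) - 1 + 1 = -i := by ring
          rw [he, ihe, ih] at h
          have key := key_id a (-((-i:ℤ):ℚ) + 1) M
          have ha1 : (-(((-i:ℤ) - 1 : ℤ) : ℚ)) = -((-i:ℤ):ℚ) + 1 := by push_cast; ring
          have ha2 : (-(((-i:ℤ) - 1 - (a:ℤ) : ℤ) : ℚ)) = -((-i:ℤ):ℚ) + 1 + (a:ℚ) := by
            push_cast; ring
          have ha3 : (-((-i:ℤ):ℚ) + 1) - 1 = -((-i:ℤ):ℚ) := by ring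
          rw [ha2] at h
          rw [ha3] at key
          rw [ha1]
          linarith [h, key]

end CIAux

open CIAux

/-- Let z(t) be the formal power series inverse of t = z(1−z)^{m²+2m} with z(0)=0, and
F = (1−(m+1)z)/(1−z)^{m+2} viewed as a power series in t. Then for n ≥ 1,
[tⁿ]F = ((m+1)/(n(mn+1)))·C((m+1)²n+m, n−1). Here `Z` plays the role of z(t) and the
ambient variable `PowerSeries.X` plays the role of t. -/
theorem coeff_intervals (m : ℕ) (hm : 1 ≤ m) (Z : PowerSeries ℚ)
    (hZ0 : PowerSeries.constantCoeff Z = 0)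
    (hZ : Z * (1 - Z)^(m^2 + 2*m) = PowerSeries.X)
    (n : ℕ) (hn : 1 ≤ n) :
    PowerSeries.coeff n ((1 - PowerSeries.C ((m : ℚ)+1) * Z) * ((1 - Z)^(m+2))⁻¹)
      = ((m : ℚ)+1)/((n : ℚ)*((m : ℚ)*(n : ℚ)+1)) * (Nat.choose ((m+1)^2*n + m) (n-1) : ℚ) := by
  have hκC : PowerSeries.C ((m:ℚ)+1) = ((m+1 : ℕ) : PowerSeries ℚ) := by
    rw [show ((m:ℚ)+1) = ((m+1:ℕ):ℚ) by push_cast; ring, map_natCast]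
  rw [hκC]
  set G : PowerSeries ℚ := (1 - ((m+1 : ℕ) : PowerSeries ℚ) * Z) * ((1 - Z)^(m+2))⁻¹ with hGdef
  -- step 1: the derivative identity
  have hfin : (d⁄dX ℚ) G * (1 - Z)^(m^2+3*m+2) = 1 := by
    rw [hGdef]
    have hw0 : constantCoeff (1 - Z) = 1 := by simp [map_sub, hZ0]
    obtain ⟨A, hA⟩ : ∃ A, m^2 + 2*m = A + 1 :=
      ⟨m^2+2*m-1, (Nat.succ_pred_eq_of_pos (by positivity)).symm⟩
    set z' : PowerSeries ℚ := (d⁄dX ℚ) Z with hz'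
    have hdw : (d⁄dX ℚ) (1 - Z) = -z' := by
      rw [map_sub, hz']; simp
    have hdwp : ∀ k : ℕ, (d⁄dX ℚ) ((1-Z)^(k+1))
        = -(((k+1 : ℕ) : PowerSeries ℚ) * (1-Z)^k * z') := by
      intro k
      rw [Derivation.leibniz_pow, hdw]
      simp only [Nat.add_sub_cancel, smul_eq_mul, nsmul_eq_mul]
      ring
    have hdwp2 : (d⁄dX ℚ) ((1-Z)^(m+2))
        = -(((m+2 : ℕ) : PowerSeries ℚ) * (1-Z)^(m+1) * z') := by
      rw [show m+2 = (m+1)+1 from rfl]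
      exact hdwp (m+1)
    have hdnum : (d⁄dX ℚ) (1 - ((m+1 : ℕ) : PowerSeries ℚ) * Z)
        = -(((m+1 : ℕ) : PowerSeries ℚ) * z') := by
      have hC : (d⁄dX ℚ) (((m+1 : ℕ) : PowerSeries ℚ)) = 0 := by
        rw [← map_natCast (PowerSeries.C (R := ℚ)) (m+1), derivative_C]
      rw [map_sub, Derivation.leibniz, hC, hz']
      simp only [smul_eq_mul, smul_zero, mul_zero, zero_add, Derivation.map_one_eq_zero]
      ring
    have hE2 : z' * (1-Z)^(A+1) - (((m^2+2*m:ℕ)) : PowerSeries ℚ) * Z * (1-Z)^A * z' = 1 := by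
      rw [hA]
      have h := congrArg (d⁄dX ℚ) hZ
      rw [hA] at h
      rw [derivative_X, Derivation.leibniz _ Z ((1-Z)^(A+1)), hdwp A,
        smul_eq_mul, smul_eq_mul, ← hz'] at h
      linear_combination h
    have hwpow : constantCoeff ((1-Z)^(m+2)) ≠ 0 := by
      rw [map_pow, hw0, one_pow]; exact one_ne_zero
    have hG1 : (1 - ((m+1 : ℕ) : PowerSeries ℚ) * Z) * ((1-Z)^(m+2))⁻¹ * (1-Z)^(m+2)
        = 1 - ((m+1 : ℕ) : PowerSeries ℚ) * Z := by
      rw [mul_assoc, PowerSeries.inv_mul_cancel _ hwpow, mul_one]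
    have hE1 : (d⁄dX ℚ) ((1 - ((m+1 : ℕ) : PowerSeries ℚ) * Z) * ((1-Z)^(m+2))⁻¹) * (1-Z)^(m+2)
        + ((1 - ((m+1 : ℕ) : PowerSeries ℚ) * Z) * ((1-Z)^(m+2))⁻¹)
            * (-(((m+2:ℕ)) : PowerSeries ℚ) * (1-Z)^(m+1) * z')
        = -(((m+1 : ℕ) : PowerSeries ℚ) * z') := by
      have h := congrArg (d⁄dX ℚ) hG1
      rw [Derivation.leibniz _ ((1 - ((m+1 : ℕ) : PowerSeries ℚ) * Z) * ((1-Z)^(m+2))⁻¹)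
          ((1-Z)^(m+2)), hdwp2, hdnum, smul_eq_mul, smul_eq_mul] at h
      linear_combination h
    have hexp : m^2+3*m+2 = (A+1) + (m+2) := by omega
    rw [hexp]
    push_cast at hE1 hE2 hG1 ⊢
    linear_combination (norm := ring)
      ((1-Z)^(A+1)) * hE1 + (((m:PowerSeries ℚ)+2) * (1-Z)^A * z') * hG1 + hE2
  -- step 2: unit setup
  have hw0 : constantCoeff (1 - Z) = 1 := by simp [map_sub, hZ0]
  have hwu : IsUnit (1 - Z) := isUnit_iff_constantCoeff.mpr (by rw [hw0]; exact isUnit_one)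
  obtain ⟨u, hu⟩ := hwu
  have hcu : constantCoeff (↑u : PowerSeries ℚ) = 1 := by rw [hu]; exact hw0
  have hcui : constantCoeff (↑u⁻¹ : PowerSeries ℚ) = 1 := by
    have h1 : (↑u : PowerSeries ℚ) * ↑u⁻¹ = 1 := u.mul_inv
    have := congrArg (constantCoeff) h1
    rw [map_mul, hcu, one_mul, map_one] at this
    exact this
  have h0 : ∀ e : ℤ, constantCoeff (↑(u ^ e) : PowerSeries ℚ) = 1 := by
    intro e
    induction e using Int.induction_on with
    | zero => simp
    | succ i ih => rw [zpow_add_one, Units.val_mul, map_mul, ih, hcu, one_mul]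
    | pred i ih => rw [zpow_sub_one, Units.val_mul, map_mul, ih, hcui, one_mul]
  have hXw : (X : PowerSeries ℚ) = (1-Z)^(m^2+2*m) - (1-Z)^(m^2+2*m+1) := by
    rw [← hZ]; ring
  have hrec : ∀ e : ℤ, (↑(u ^ e) : PowerSeries ℚ)
      = (↑(u ^ (e+1)) : PowerSeries ℚ)
        + X * (↑(u ^ (e - (m^2+2*m : ℕ))) : PowerSeries ℚ) := by
    intro e
    have h1 : u ^ e = u ^ (e - (m^2+2*m : ℕ)) * u ^ ((m^2+2*m : ℕ) : ℤ) := by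
      rw [← zpow_add]; congr 1; ring
    have h2 : u ^ (e+1) = u ^ (e - (m^2+2*m : ℕ)) * u ^ (((m^2+2*m+1 : ℕ)) : ℤ) := by
      rw [← zpow_add]; congr 1; push_cast; ring
    rw [h1, h2, Units.val_mul, Units.val_mul, zpow_natCast, zpow_natCast,
      Units.val_pow_eq_pow_val, Units.val_pow_eq_pow_val, hu, hXw]
    ring
  -- step 3: the derivative equals a unit zpow
  have hubv : (↑(u ^ (m^2+3*m+2 : ℕ)) : PowerSeries ℚ) = (1-Z)^(m^2+3*m+2) := by
    rw [Units.val_pow_eq_pow_val, hu]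
  have hGd : (d⁄dX ℚ) G = (↑(u ^ (-((m^2+3*m+2 : ℕ) : ℤ))) : PowerSeries ℚ) := by
    have hfin' : (d⁄dX ℚ) G * (↑(u ^ (m^2+3*m+2 : ℕ)) : PowerSeries ℚ) = 1 := by
      rw [hubv]; exact hfin
    have hz : u ^ (-((m^2+3*m+2 : ℕ) : ℤ)) = (u ^ (m^2+3*m+2 : ℕ))⁻¹ := by
      rw [zpow_neg, zpow_natCast]
    rw [hz]
    calc (d⁄dX ℚ) G
        = (d⁄dX ℚ) G * ((↑(u ^ (m^2+3*m+2 : ℕ)) : PowerSeries ℚ)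
            * (↑((u ^ (m^2+3*m+2 : ℕ))⁻¹) : PowerSeries ℚ)) := by
          rw [← Units.val_mul, mul_inv_cancel, Units.val_one, mul_one]
      _ = ((d⁄dX ℚ) G * (↑(u ^ (m^2+3*m+2 : ℕ)) : PowerSeries ℚ))
            * (↑((u ^ (m^2+3*m+2 : ℕ))⁻¹) : PowerSeries ℚ) := by ring
      _ = (↑((u ^ (m^2+3*m+2 : ℕ))⁻¹) : PowerSeries ℚ) := by rw [hfin', one_mul]
  -- step 4: coefficient extraction
  obtain ⟨k, rfl⟩ : ∃ k, n = k+1 := ⟨n-1, by omega⟩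
  cases k with
  | zero =>
      have hder := coeff_derivative G 0
      rw [hGd] at hder
      have h1 : coeff 0 (↑(u ^ (-((m^2+3*m+2 : ℕ) : ℤ))) : PowerSeries ℚ) = 1 := by
        rw [coeff_zero_eq_constantCoeff, h0]
      rw [h1] at hder
      have hc1 : coeff 1 G = 1 := by
        push_cast at hder; linarith
      rw [hc1]
      have hmne : ((m:ℚ)+1) ≠ 0 := by positivity
      norm_num
      exact (div_self hmne).symm
  | succ M =>
      -- n = M + 2
      have hder := coeff_derivative G (M+1)
      rw [hGd] at hder
      have hval : coeff (M+1) (↑(u ^ (-((m^2+3*m+2 : ℕ) : ℤ))) : PowerSeries ℚ)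
          = g (m^2+2*m) M (((m^2+3*m+2 : ℕ)) : ℚ) := by
        rw [coeff_aux u (m^2+2*m) h0 hrec M (-((m^2+3*m+2 : ℕ) : ℤ))]
        congr 1
        try push_cast
        try ring
      rw [hval] at hder
      -- identify the descending factorial argument with T
      have hargT : ((M:ℚ)+1)*((m^2+2*m : ℕ):ℚ) + (((m^2+3*m+2 : ℕ)):ℚ) + (M:ℚ)
          = (((m+1)^2*(M+1+1)+m : ℕ):ℚ) := by push_cast; ring
      rw [g, hargT] at hder
      set T : ℕ := (m+1)^2*(M+1+1)+m with hTdef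
      have h1T : 1 ≤ (m+1)^2 := Nat.one_le_iff_ne_zero.mpr (by positivity)
      have hTle : M+1 ≤ T := by rw [hTdef]; nlinarith
      have hch : dsc (T:ℚ) (M+1) = (T.choose (M+1) : ℚ) * ((M+1)! : ℚ) :=
        dsc_choose T (M+1) hTle
      rw [dsc_succ] at hch
      have hTM : (T:ℚ) - (M:ℚ) = ((m:ℚ)+2)*((m:ℚ)*((M:ℚ)+2)+1) := by
        rw [hTdef]; push_cast; ring
      rw [hTM] at hch
      have hfacs : ((M+1)! : ℚ) = ((M:ℚ)+1) * ((M)! : ℚ) := by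
        rw [Nat.factorial_succ]; push_cast; ring
      rw [hfacs] at hch
      have hM1 : ((M:ℚ)+1) ≠ 0 := by positivity
      have hM2 : ((M:ℚ)+2) ≠ 0 := by positivity
      have hMf : (((M)!) : ℚ) ≠ 0 := by positivity
      have hq : ((m:ℚ)*((M:ℚ)+2)+1) ≠ 0 := by positivity
      simp only [Nat.add_sub_cancel]
      push_cast at hder hch ⊢
      field_simp at hder hch ⊢
      refine mul_right_cancel₀ (b := ((M:ℚ)+1) * ((M)! : ℚ)) (by positivity) ?_
      linear_combination (-((m:ℚ)*((M:ℚ)+1+1)+1)) * hder + ((m:ℚ)+1) * hch
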